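/- Let (f,g) be a pair of real polynomials in two variables whose Jacobian determinant is nowhere vanishing, and suppose the polynomial map (f,g): ℝ² → ℝ² is not injective. Then for every (λ,μ) ≠ (0,0), the polynomial λf + μg has no critical points and has at least one disconnected level set. -/

import Mathlib

open MvPolynomial Set

noncomputable def Jac (f g : MvPolynomial (Fin 2) ℝ) : MvPolynomial (Fin 2) ℝ :=
  pderiv 0 f * pderiv 1 g - pderiv 1 f * pderiv 0 g

/-! ### Differentiability of multivariate polynomial evaluation -/
open MvPolynomial Set

noncomputable def gradCLM (h : MvPolynomial (Fin 2) ℝ) (p : Fin 2 → ℝ) :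
    (Fin 2 → ℝ) →L[ℝ] ℝ :=
  eval p (pderiv 0 h) • ContinuousLinearMap.proj 0 +
  eval p (pderiv 1 h) • ContinuousLinearMap.proj 1

lemma gradCLM_apply (h : MvPolynomial (Fin 2) ℝ) (p v : Fin 2 → ℝ) :
    gradCLM h p v = eval p (pderiv 0 h) * v 0 + eval p (pderiv 1 h) * v 1 := by
  simp [gradCLM]

lemma hasStrictFDerivAt_eval (h : MvPolynomial (Fin 2) ℝ) (p : Fin 2 → ℝ) :
    HasStrictFDerivAt (fun q => eval q h) (gradCLM h p) p := by
  induction h using MvPolynomial.induction_on with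
  | C a =>
      have : gradCLM (C a) p = 0 := by
        ext v; simp [gradCLM_apply, pderiv_C]
      rw [this]
      simpa [eval_C] using hasStrictFDerivAt_const a p
  | add f g hf hg =>
      have : gradCLM (f + g) p = gradCLM f p + gradCLM g p := by
        ext v; simp [gradCLM_apply]; ring
      rw [this]
      simpa [eval_add] using HasStrictFDerivAt.fun_add hf hg
  | mul_X f n hf =>
      have hX : HasStrictFDerivAt (fun q : Fin 2 → ℝ => q n)
          (ContinuousLinearMap.proj n : (Fin 2 → ℝ) →L[ℝ] ℝ) p :=
        (ContinuousLinearMap.proj n : (Fin 2 → ℝ) →L[ℝ] ℝ).hasStrictFDerivAt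
      have hmul := HasStrictFDerivAt.fun_mul hf hX
      have : gradCLM (f * X n) p
          = eval p f • ContinuousLinearMap.proj n + p n • gradCLM f p := by
        ext v
        fin_cases n <;>
          simp [gradCLM_apply, pderiv_mul, pderiv_X_self, pderiv_X_of_ne,
            ContinuousLinearMap.proj] <;> ring
      rw [this]
      simpa [eval_mul, eval_X] using hmul

noncomputable def rowCLM (a b : ℝ) : (Fin 2 → ℝ) →L[ℝ] ℝ :=
  a • ContinuousLinearMap.proj 0 + b • ContinuousLinearMap.proj 1

lemma rowCLM_apply (a b : ℝ) (v : Fin 2 → ℝ) : rowCLM a b v = a * v 0 + b * v 1 := by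
  simp [rowCLM]

lemma gradCLM_eq_rowCLM (h : MvPolynomial (Fin 2) ℝ) (p : Fin 2 → ℝ) :
    gradCLM h p = rowCLM (eval p (pderiv 0 h)) (eval p (pderiv 1 h)) := rfl

noncomputable def myCLE (a b c d : ℝ) (hdet : a * d - b * c ≠ 0) :
    (Fin 2 → ℝ) ≃L[ℝ] ℝ × ℝ :=
  ContinuousLinearEquiv.equivOfInverse
    ((rowCLM a b).prod (rowCLM c d))
    (ContinuousLinearMap.pi
      ![(d / (a * d - b * c)) • ContinuousLinearMap.fst ℝ ℝ ℝ -
          (b / (a * d - b * c)) • ContinuousLinearMap.snd ℝ ℝ ℝ,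
        (a / (a * d - b * c)) • ContinuousLinearMap.snd ℝ ℝ ℝ -
          (c / (a * d - b * c)) • ContinuousLinearMap.fst ℝ ℝ ℝ])
    (fun v => by
      funext i
      fin_cases i <;>
        · simp [ContinuousLinearMap.pi_apply, ContinuousLinearMap.prod_apply,
            rowCLM_apply]
          have hdet' : d * a - b * c ≠ 0 := by rw [mul_comm d a]; exact hdet
          field_simp
          ring)
    (fun w => by
      apply Prod.ext <;>
        · simp [ContinuousLinearMap.pi_apply, ContinuousLinearMap.prod_apply,
            rowCLM_apply]
          have hdet' : d * a - b * c ≠ 0 := by rw [mul_comm d a]; exact hdet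
          have hdet'' : d * a - c * b ≠ 0 := by rw [mul_comm d a, mul_comm c b]; exact hdet
          field_simp
          ring)

lemma myCLE_coe (a b c d : ℝ) (hdet : a * d - b * c ≠ 0) :
    (myCLE a b c d hdet : (Fin 2 → ℝ) →L[ℝ] ℝ × ℝ) = (rowCLM a b).prod (rowCLM c d) := rfl

section Core

variable {X : Type*} [TopologicalSpace X] [T2Space X]

/-- A local chart for a "level set with transversal coordinate" structure:
around `a ∈ S`, the function `κ` restricted to `S` is invertible with continuous
inverse `ρ` defined on an open interval around `κ a`. -/
structure LevelChart (S : Set X) (κ : X → ℝ) (a : X) where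
  ε : ℝ
  ρ : ℝ → X
  εpos : 0 < ε
  cont : ContinuousOn ρ (Ioo (κ a - ε) (κ a + ε))
  sect : ∀ v ∈ Ioo (κ a - ε) (κ a + ε), ρ v ∈ S ∧ κ (ρ v) = v
  A : Set X
  openA : IsOpen A
  memA : a ∈ A
  inv : ∀ x ∈ S ∩ A, κ x ∈ Ioo (κ a - ε) (κ a + ε) ∧ ρ (κ x) = x

variable {S : Set X} {κ : X → ℝ}

/-- Uniqueness of continuous sections of `κ` over a preconnected set of reals. -/
lemma sect_unique (charts : ∀ a ∈ S, LevelChart S κ a) {I : Set ℝ} (hI : IsPreconnected I)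
    {σ τ : ℝ → X} (hσc : ContinuousOn σ I) (hτc : ContinuousOn τ I)
    (hσ : ∀ u ∈ I, σ u ∈ S ∧ κ (σ u) = u) (hτ : ∀ u ∈ I, τ u ∈ S ∧ κ (τ u) = u)
    {u₀ : ℝ} (hu₀ : u₀ ∈ I) (h0 : σ u₀ = τ u₀) {u₁ : ℝ} (hu₁ : u₁ ∈ I) : σ u₁ = τ u₁ := by
  haveI : PreconnectedSpace I := Subtype.preconnectedSpace hI
  set F : I → X := fun u => σ u with hF
  set G : I → X := fun u => τ u with hG
  have hFc : Continuous F := continuousOn_iff_continuous_restrict.1 hσc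
  have hGc : Continuous G := continuousOn_iff_continuous_restrict.1 hτc
  have hclopen : IsClopen {u : I | F u = G u} := by
    constructor
    · exact isClosed_eq hFc hGc
    · rw [isOpen_iff_mem_nhds]
      rintro u (hu : σ (u : ℝ) = τ (u : ℝ))
      have hσS : σ (u : ℝ) ∈ S := (hσ u u.2).1
      obtain c := charts _ hσS
      have hmem : u ∈ F ⁻¹' c.A ∩ G ⁻¹' c.A := by
        refine ⟨mem_preimage.2 c.memA, mem_preimage.2 ?_⟩
        show τ (u : ℝ) ∈ c.A
        rw [← hu]; exact c.memA
      have hopen : IsOpen (F ⁻¹' c.A ∩ G ⁻¹' c.A) :=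
        (c.openA.preimage hFc).inter (c.openA.preimage hGc)
      filter_upwards [hopen.mem_nhds hmem] with w hw
      have e1 : c.ρ (κ (σ (w : ℝ))) = σ (w : ℝ) := (c.inv _ ⟨(hσ w w.2).1, hw.1⟩).2
      have e2 : c.ρ (κ (τ (w : ℝ))) = τ (w : ℝ) := (c.inv _ ⟨(hτ w w.2).1, hw.2⟩).2
      show σ (w : ℝ) = τ (w : ℝ)
      rw [← e1, ← e2, (hσ w w.2).2, (hτ w w.2).2]
  have : {u : I | F u = G u} = univ := IsClopen.eq_univ hclopen ⟨⟨u₀, hu₀⟩, h0⟩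
  have := this ▸ (mem_univ (⟨u₁, hu₁⟩ : I))
  exact this

end Core

section Core2

variable {X : Type*} [TopologicalSpace X] [T2Space X] {S : Set X} {κ : X → ℝ}

/-- A continuous section of `κ` through `S` over the interval from `s` to `c`,
starting at `p`. -/
def IsSect (S : Set X) (κ : X → ℝ) (p : X) (s c : ℝ) (σ : ℝ → X) : Prop :=
  ContinuousOn σ (uIcc s c) ∧ σ s = p ∧ ∀ u ∈ uIcc s c, σ u ∈ S ∧ κ (σ u) = u

/-- Points of `S` reachable from `p` by a continuous section of `κ`. -/
def Wset (S : Set X) (κ : X → ℝ) (p : X) (s : ℝ) : Set X :=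
  {z | z ∈ S ∧ ∃ σ : ℝ → X, IsSect S κ p s (κ z) σ ∧ σ (κ z) = z}

lemma contOn_union_closed {f : ℝ → X} {A B : Set ℝ} (hA : IsClosed A) (hB : IsClosed B)
    (hfA : ContinuousOn f A) (hfB : ContinuousOn f B) : ContinuousOn f (A ∪ B) := by
  intro u hu
  refine ContinuousWithinAt.union ?_ ?_
  · by_cases huA : u ∈ A
    · exact hfA u huA
    · exact continuousWithinAt_of_notMem_closure (by rwa [hA.closure_eq])
  · by_cases huB : u ∈ B
    · exact hfB u huB
    · exact continuousWithinAt_of_notMem_closure (by rwa [hB.closure_eq])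

lemma step_lemma (charts : ∀ a ∈ S, LevelChart S κ a) {p : X} {s : ℝ}
    {a : X} (c : LevelChart S κ a) {x z : X} (hx : x ∈ S ∩ c.A) (hz : z ∈ S ∩ c.A)
    (hxW : x ∈ Wset S κ p s) : z ∈ Wset S κ p s := by
  obtain ⟨-, σ, ⟨hσc, hσs, hσprop⟩, hσend⟩ := hxW
  obtain ⟨haxI, haxρ⟩ := c.inv x hx
  obtain ⟨hbI, hbρ⟩ := c.inv z hz
  set ax := κ x with hax
  set b := κ z with hb
  set Iε : Set ℝ := Ioo (κ a - c.ε) (κ a + c.ε) with hIε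
  have hIεoc : Iε.OrdConnected := ordConnected_Ioo
  have hagree : σ ax = c.ρ ax := by rw [hσend, haxρ]
  have cover : b ∈ uIcc s ax ∨ s ∈ uIcc ax b ∨ ((s ≤ ax ∧ ax ≤ b) ∨ (b ≤ ax ∧ ax ≤ s)) := by
    simp only [Set.mem_uIcc]
    rcases le_total s ax with h1|h1 <;> rcases le_total ax b with h2|h2 <;>
      rcases le_total s b with h3|h3
    · exact Or.inr (Or.inr (Or.inl ⟨h1, h2⟩))
    · exact Or.inr (Or.inr (Or.inl ⟨h1, h2⟩))
    · exact Or.inl (Or.inl ⟨h3, h2⟩)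
    · exact Or.inr (Or.inl (Or.inr ⟨h3, h1⟩))
    · exact Or.inr (Or.inl (Or.inl ⟨h1, h3⟩))
    · exact Or.inl (Or.inr ⟨h2, h3⟩)
    · exact Or.inr (Or.inr (Or.inr ⟨h2, h1⟩))
    · exact Or.inr (Or.inr (Or.inr ⟨h2, h1⟩))
  rcases cover with hbA | hsB | ⟨h1, h2⟩ | ⟨h1, h2⟩
  · -- Case A : b is between s and ax; restrict σ.
    have hsub1 : uIcc ax b ⊆ uIcc s ax :=
      ordConnected_uIcc.uIcc_subset right_mem_uIcc hbA
    have hsub2 : uIcc ax b ⊆ Iε := hIεoc.uIcc_subset haxI hbI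
    have hend : σ b = c.ρ b :=
      sect_unique charts isPreconnected_uIcc (hσc.mono hsub1) (c.cont.mono hsub2)
        (fun u hu => hσprop u (hsub1 hu)) (fun u hu => c.sect u (hsub2 hu))
        left_mem_uIcc hagree right_mem_uIcc
    have hsub3 : uIcc s b ⊆ uIcc s ax :=
      ordConnected_uIcc.uIcc_subset left_mem_uIcc hbA
    exact ⟨hz.1, σ, ⟨hσc.mono hsub3, hσs, fun u hu => hσprop u (hsub3 hu)⟩,
      by rw [hend, hbρ]⟩
  · -- Case B : s is between ax and b; use ρ itself.
    have hsubIoo : uIcc ax b ⊆ Iε := hIεoc.uIcc_subset haxI hbI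
    have hsIoo : s ∈ Iε := hsubIoo hsB
    have hIpc : IsPreconnected (uIcc s ax ∩ Iε) :=
      (ordConnected_uIcc.inter hIεoc).isPreconnected
    have hps : σ s = c.ρ s :=
      sect_unique charts hIpc (hσc.mono inter_subset_left) (c.cont.mono inter_subset_right)
        (fun u hu => hσprop u hu.1) (fun u hu => c.sect u hu.2)
        (u₀ := ax) ⟨right_mem_uIcc, haxI⟩ hagree (u₁ := s) ⟨left_mem_uIcc, hsIoo⟩
    have hsub : uIcc s b ⊆ Iε := hIεoc.uIcc_subset hsIoo hbI
    exact ⟨hz.1, c.ρ, ⟨c.cont.mono hsub, by rw [← hps, hσs], fun u hu => c.sect u (hsub hu)⟩,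
      hbρ⟩
  · -- Case C1 : s ≤ ax ≤ b; glue σ and ρ at ax.
    have hsb : s ≤ b := h1.trans h2
    have hIccIε : Icc ax b ⊆ Iε := by
      rw [← uIcc_of_le h2]; exact hIεoc.uIcc_subset haxI hbI
    set σ' : ℝ → X := fun u => if u ≤ ax then σ u else c.ρ u with hσ'
    have eq1 : EqOn σ' σ (Icc s ax) := fun u hu => if_pos hu.2
    have eq2 : EqOn σ' c.ρ (Icc ax b) := by
      intro u hu
      by_cases h : u ≤ ax
      · have huax : u = ax := le_antisymm h hu.1
        rw [hσ']; simp [huax, hagree]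
      · exact if_neg h
    have hcont : ContinuousOn σ' (uIcc s b) := by
      rw [uIcc_of_le hsb]
      refine ContinuousOn.mono ?_ (Icc_subset_Icc_union_Icc (b := ax))
      refine contOn_union_closed isClosed_Icc isClosed_Icc ?_ ?_
      · exact ContinuousOn.congr (hσc.mono (by rw [uIcc_of_le h1])) eq1
      · exact ContinuousOn.congr (c.cont.mono hIccIε) eq2
    refine ⟨hz.1, σ', ⟨hcont, by rw [hσ']; simp only [if_pos h1, hσs], ?_⟩, ?_⟩
    · intro u hu
      rw [uIcc_of_le hsb] at hu
      by_cases h : u ≤ ax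
      · have : σ' u = σ u := if_pos h
        rw [this]
        exact hσprop u (by rw [uIcc_of_le h1]; exact ⟨hu.1, h⟩)
      · have : σ' u = c.ρ u := if_neg h
        rw [this]
        exact c.sect u (hIccIε ⟨le_of_not_ge h, hu.2⟩)
    · have : σ' b = c.ρ b := eq2 ⟨h2, le_refl b⟩
      rw [this, hbρ]
  · -- Case C2 : b ≤ ax ≤ s; glue σ and ρ at ax (mirrored).
    have hbs : b ≤ s := h1.trans h2
    have hIccIε : Icc b ax ⊆ Iε := by
      rw [← uIcc_of_ge h1]; exact hIεoc.uIcc_subset haxI hbI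
    set σ' : ℝ → X := fun u => if ax ≤ u then σ u else c.ρ u with hσ'
    have eq1 : EqOn σ' σ (Icc ax s) := fun u hu => if_pos hu.1
    have eq2 : EqOn σ' c.ρ (Icc b ax) := by
      intro u hu
      by_cases h : ax ≤ u
      · have huax : u = ax := le_antisymm hu.2 h
        rw [hσ']; simp [huax, hagree]
      · exact if_neg h
    have hcont : ContinuousOn σ' (uIcc s b) := by
      rw [uIcc_of_ge hbs]
      refine ContinuousOn.mono ?_ (Icc_subset_Icc_union_Icc (b := ax))
      refine contOn_union_closed isClosed_Icc isClosed_Icc ?_ ?_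
      · exact ContinuousOn.congr (c.cont.mono hIccIε) eq2
      · exact ContinuousOn.congr (hσc.mono (by rw [uIcc_of_ge h2])) eq1
    refine ⟨hz.1, σ', ⟨hcont, by rw [hσ']; simp only [if_pos h2, hσs], ?_⟩, ?_⟩
    · intro u hu
      rw [uIcc_of_ge hbs] at hu
      by_cases h : ax ≤ u
      · have : σ' u = σ u := if_pos h
        rw [this]
        exact hσprop u (by rw [uIcc_of_ge h2]; exact ⟨h, hu.2⟩)
      · have : σ' u = c.ρ u := if_neg h
        rw [this]
        exact c.sect u (hIccIε ⟨hu.1, le_of_not_ge h⟩)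
    · have : σ' b = c.ρ b := eq2 ⟨le_refl b, h1⟩
      rw [this, hbρ]

/-- The key topological lemma: if a set `S` is preconnected and carries
level charts for `κ`, then `κ` is injective on `S`. -/
lemma levelchart_injOn (hS : IsPreconnected S) (charts : ∀ a ∈ S, LevelChart S κ a) :
    InjOn κ S := by
  intro x hx y hy hxy
  set s := κ x with hs
  set W := Wset S κ x s with hW
  have hW_sub : W ⊆ S := fun z hz => hz.1
  have hxW : x ∈ W := by
    refine ⟨hx, fun _ => x, ⟨continuousOn_const, rfl, ?_⟩, rfl⟩
    intro u hu
    rw [← hs, uIcc_self, mem_singleton_iff] at hu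
    exact ⟨hx, by rw [hu, hs]⟩
  set U : Set X := ⋃₀ {A : Set X | IsOpen A ∧ S ∩ A ⊆ W} with hU
  have hUopen : IsOpen U := isOpen_sUnion (fun _ h => h.1)
  have hWU : W ⊆ U := by
    intro z hzW
    obtain c := charts z (hW_sub hzW)
    exact ⟨c.A, ⟨c.openA, fun w hw =>
      step_lemma charts c ⟨hW_sub hzW, c.memA⟩ hw hzW⟩, c.memA⟩
  have hSU : S ∩ U ⊆ W := by
    rintro z ⟨hzS, A, ⟨hAopen, hAsub⟩, hzA⟩
    exact hAsub ⟨hzS, hzA⟩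
  have hclosed : S ∩ closure W ⊆ W := by
    rintro z ⟨hzS, hzc⟩
    obtain c := charts z hzS
    obtain ⟨w, hwA, hwW⟩ := mem_closure_iff.1 hzc c.A c.openA c.memA
    exact step_lemma charts c ⟨hW_sub hwW, hwA⟩ ⟨hzS, c.memA⟩ hwW
  have hyW : y ∈ W := by
    by_contra hyW
    have hyV : y ∈ (closure W)ᶜ := fun hc => hyW (hclosed ⟨hy, hc⟩)
    obtain ⟨w, hwS, hwU, hwV⟩ := hS U (closure W)ᶜ hUopen isClosed_closure.isOpen_compl
      (fun z hz => by
        by_cases hzc : z ∈ closure W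
        · exact Or.inl (hWU (hclosed ⟨hz, hzc⟩))
        · exact Or.inr hzc)
      ⟨x, hx, hWU hxW⟩ ⟨y, hy, hyV⟩
    exact hwV (subset_closure (hSU ⟨hwS, hwU⟩))
  obtain ⟨-, σ, ⟨hc, hsp, hprop⟩, hend⟩ := hyW
  calc x = σ s := hsp.symm
    _ = σ (κ y) := congrArg σ hxy
    _ = y := hend

end Core2

/-! ### Construction of level charts from the inverse function theorem -/

lemma continuous_eval_poly (h : MvPolynomial (Fin 2) ℝ) :
    Continuous fun p : Fin 2 → ℝ => eval p h :=
  continuous_iff_continuousAt.2 fun p => HasStrictFDerivAt.continuousAt (hasStrictFDerivAt_eval h p)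

noncomputable def level_charts (h k : MvPolynomial (Fin 2) ℝ)
    (hdet : ∀ p : Fin 2 → ℝ,
      eval p (pderiv 0 h) * eval p (pderiv 1 k) -
      eval p (pderiv 1 h) * eval p (pderiv 0 k) ≠ 0)
    (t : ℝ) (a : Fin 2 → ℝ) (ha : a ∈ {p : Fin 2 → ℝ | eval p h = t}) :
    LevelChart {p : Fin 2 → ℝ | eval p h = t} (fun p => eval p k) a := by
  have hat : eval a h = t := ha
  set Φ : (Fin 2 → ℝ) → ℝ × ℝ := fun p => (eval p h, eval p k) with hΦdef
  have hΦc : Continuous Φ := (continuous_eval_poly h).prodMk (continuous_eval_poly k)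
  set E := myCLE (eval a (pderiv 0 h)) (eval a (pderiv 1 h))
      (eval a (pderiv 0 k)) (eval a (pderiv 1 k)) (hdet a) with hE
  have hder : HasStrictFDerivAt Φ (E : (Fin 2 → ℝ) →L[ℝ] ℝ × ℝ) a := by
    rw [hE, myCLE_coe, ← gradCLM_eq_rowCLM, ← gradCLM_eq_rowCLM]
    exact HasStrictFDerivAt.prodMk (hasStrictFDerivAt_eval h a) (hasStrictFDerivAt_eval k a)
  set e := HasStrictFDerivAt.toOpenPartialHomeomorph Φ hder with he
  have ha_src : a ∈ e.source := HasStrictFDerivAt.mem_toOpenPartialHomeomorph_source hder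
  have hecoe : (e : (Fin 2 → ℝ) → ℝ × ℝ) = Φ := HasStrictFDerivAt.toOpenPartialHomeomorph_coe hder
  have htgt : Φ a ∈ e.target := HasStrictFDerivAt.image_mem_toOpenPartialHomeomorph_target hder
  have hex : ∃ ε > 0, Metric.ball (Φ a) ε ⊆ e.target :=
    Metric.isOpen_iff.1 e.open_target (Φ a) htgt
  set ε := hex.choose with hεdef
  have hε : 0 < ε := hex.choose_spec.1
  have hball : Metric.ball (Φ a) ε ⊆ e.target := hex.choose_spec.2
  have hΦa : Φ a = (t, eval a k) := by rw [hΦdef]; simp [hat]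
  have hIoo_sub : ∀ v ∈ Ioo (eval a k - ε) (eval a k + ε), (t, v) ∈ e.target := by
    intro v hv
    apply hball
    rw [hΦa, ← ball_prod_same]
    exact ⟨Metric.mem_ball_self hε, by rwa [Real.ball_eq_Ioo]⟩
  refine ⟨ε, fun v => e.symm (t, v), hε, ?_, ?_,
    e.source ∩ Φ ⁻¹' Metric.ball (Φ a) ε,
    e.open_source.inter (Metric.isOpen_ball.preimage hΦc),
    ⟨ha_src, by simp [Metric.mem_ball_self hε]⟩, ?_⟩
  · refine ContinuousOn.comp e.continuousOn_symm
      ((continuous_const.prodMk continuous_id).continuousOn) ?_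
    intro v hv
    exact hIoo_sub v hv
  · intro v hv
    have h1 : (t, v) ∈ e.target := hIoo_sub v hv
    have h3 : Φ (e.symm (t, v)) = (t, v) := by rw [← hecoe]; exact e.right_inv h1
    exact ⟨congrArg Prod.fst h3, congrArg Prod.snd h3⟩
  · rintro x ⟨hxS, hx_src, hx_ball⟩
    have hxt : eval x h = t := hxS
    have hΦx : Φ x = (t, eval x k) := by rw [hΦdef]; simp [hxt]
    have hx_ball' : (t, eval x k) ∈ Metric.ball (Φ a) ε := by
      rw [← hΦx]; exact hx_ball
    rw [hΦa, ← ball_prod_same] at hx_ball'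
    constructor
    · have := hx_ball'.2
      rwa [Real.ball_eq_Ioo] at this
    · show e.symm (t, eval x k) = x
      rw [← hΦx, ← hecoe]
      exact e.left_inv hx_src

/-! ### Main theorem -/

theorem pencil_of_atypical_pair (f g : MvPolynomial (Fin 2) ℝ)
    (hJ : ∀ p : Fin 2 → ℝ, eval p (Jac f g) ≠ 0)
    (hni : ¬ Function.Injective (fun p : Fin 2 → ℝ => (eval p f, eval p g))) :
    ∀ lam mu : ℝ, (lam, mu) ≠ (0, 0) →
      (∀ p : Fin 2 → ℝ, eval p (pderiv 0 (C lam * f + C mu * g)) ≠ 0 ∨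
                         eval p (pderiv 1 (C lam * f + C mu * g)) ≠ 0) ∧
      (∃ t : ℝ, {p : Fin 2 → ℝ | eval p (C lam * f + C mu * g) = t}.Nonempty ∧
        ¬ IsPreconnected {p : Fin 2 → ℝ | eval p (C lam * f + C mu * g) = t}) := by
  intro lam mu hlm
  have hsq : lam ^ 2 + mu ^ 2 ≠ 0 := by
    intro hc
    apply hlm
    have h1 : lam = 0 := by nlinarith [sq_nonneg lam, sq_nonneg mu]
    have h2 : mu = 0 := by nlinarith [sq_nonneg lam, sq_nonneg mu]
    simp [h1, h2]
  set h : MvPolynomial (Fin 2) ℝ := C lam * f + C mu * g with hh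
  set k : MvPolynomial (Fin 2) ℝ := C (-mu) * f + C lam * g with hk
  have hdet : ∀ p : Fin 2 → ℝ,
      eval p (pderiv 0 h) * eval p (pderiv 1 k) -
      eval p (pderiv 1 h) * eval p (pderiv 0 k) ≠ 0 := by
    intro p
    have hkey : eval p (pderiv 0 h) * eval p (pderiv 1 k) -
        eval p (pderiv 1 h) * eval p (pderiv 0 k)
        = (lam ^ 2 + mu ^ 2) * eval p (Jac f g) := by
      rw [hh, hk]
      simp only [Jac, map_add, pderiv_C_mul, eval_add, eval_mul, eval_sub, eval_C]
      ring
    rw [hkey]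
    exact mul_ne_zero hsq (hJ p)
  constructor
  · intro p
    by_contra hc
    push_neg at hc
    obtain ⟨h0, h1⟩ := hc
    have hd := hdet p
    rw [h0, h1] at hd
    simp at hd
  · by_contra hcon
    push_neg at hcon
    apply hni
    intro x y hxy
    simp only [Prod.mk.injEq] at hxy
    obtain ⟨hfx, hgx⟩ := hxy
    set t := eval x h with ht
    have hxS : x ∈ {p : Fin 2 → ℝ | eval p h = t} := ht.symm
    have hyS : y ∈ {p : Fin 2 → ℝ | eval p h = t} := by
      show eval y h = t
      rw [ht, hh]
      simp only [eval_add, eval_mul, eval_C, hfx, hgx]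
    have hSpc : IsPreconnected {p : Fin 2 → ℝ | eval p h = t} := hcon t ⟨x, hxS⟩
    have hinj : Set.InjOn (fun p : Fin 2 → ℝ => eval p k) {p : Fin 2 → ℝ | eval p h = t} :=
      levelchart_injOn hSpc (fun a ha => level_charts h k hdet t a ha)
    refine hinj hxS hyS ?_
    show eval x k = eval y k
    rw [hk]
    simp only [eval_add, eval_mul, eval_C, hfx, hgx]
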